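/- arXiv:2406.04258 — 3 statements merged into one kernel-verified Lean document; each statement's English description precedes it below -/
import Mathlib

section
/- Let n ≥ 1 and let S ⊆ {1,…,n} range over subsets. Then for distinct nonzero complex numbers y₁,…,y_n, the rational-function identity ∑_{|J|=r} ∏_{α∈J, β∉J} (1 − y_β/y_α)^{-1} = 1 holds for every 0 ≤ r ≤ n; equivalently ∑_{|J|=r} ∏_{α∈J,β∉J} y_α/(y_α − y_β) = 1. -/
open Finset

lemma eval_zero_basisDivisor (x z : ℂ) :
    Polynomial.eval 0 (Lagrange.basisDivisor x z) = z / (z - x) := by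
  rcases eq_or_ne x z with h | h
  · simp [h, Lagrange.basisDivisor]
  · have h1 : x - z ≠ 0 := sub_ne_zero.mpr h
    have h2 : z - x ≠ 0 := sub_ne_zero.mpr h.symm
    simp only [Lagrange.basisDivisor, Polynomial.eval_mul, Polynomial.eval_C,
      Polynomial.eval_sub, Polynomial.eval_X]
    field_simp
    ring

/-- Lagrange identity, form B: ∑_i ∏_{j≠i} z_j/(z_j - z_i) = 1. -/
lemma lagB {ι : Type*} [DecidableEq ι] (s : Finset ι) (hs : s.Nonempty) (v : ι → ℂ)
    (hinj : Set.InjOn v s) :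
    ∑ i ∈ s, ∏ j ∈ s.erase i, v j / (v j - v i) = 1 := by
  have h := Lagrange.sum_basis hinj hs
  have h0 := congrArg (Polynomial.eval 0) h
  simpa [Lagrange.basis, Polynomial.eval_finset_sum, Polynomial.eval_prod,
    eval_zero_basisDivisor] using h0

/-- Lagrange identity, form A: ∑_i ∏_{j≠i} z_i/(z_i - z_j) = 1, z's nonzero distinct. -/
lemma lagA {ι : Type*} [DecidableEq ι] (s : Finset ι) (hs : s.Nonempty) (v : ι → ℂ)
    (hv0 : ∀ i ∈ s, v i ≠ 0) (hinj : Set.InjOn v s) :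
    ∑ i ∈ s, ∏ j ∈ s.erase i, v i / (v i - v j) = 1 := by
  have hinv : Set.InjOn (fun i => (v i)⁻¹) s := by
    intro a ha b hb hab
    exact hinj ha hb (by
      have := congrArg (·⁻¹) hab
      simpa [inv_inv] using this)
  have h := lagB s hs (fun i => (v i)⁻¹) hinv
  rw [← h]
  refine Finset.sum_congr rfl fun i hi => Finset.prod_congr rfl fun j hj => ?_
  have hj' : j ∈ s := Finset.mem_of_mem_erase hj
  have hvi := hv0 i hi
  have hvj := hv0 j hj'
  rcases eq_or_ne (v i) (v j) with h | h
  · simp [h]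
  · rw [div_eq_div_iff (sub_ne_zero.mpr h)
      (sub_ne_zero.mpr (fun hc => h (inv_injective hc).symm))]
    field_simp

lemma key_prod {n : ℕ} (y : Fin n → ℂ) (J : Finset (Fin n)) (α : Fin n) (hα : α ∈ J) :
    (∏ γ ∈ J, ∏ β ∈ univ \ J, y γ / (y γ - y β)) * ∏ γ ∈ J.erase α, y γ / (y γ - y α)
    = (∏ γ ∈ J.erase α, ∏ β ∈ univ \ (J.erase α), y γ / (y γ - y β))
        * ∏ β ∈ univ \ J, y α / (y α - y β) := by
  have h1 : univ \ (J.erase α) = insert α (univ \ J) := by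
    rw [Finset.sdiff_erase (Finset.mem_univ α)]
  have h2 : α ∉ univ \ J := by simp [hα]
  rw [← Finset.mul_prod_erase J _ hα, h1]
  simp only [Finset.prod_insert h2, Finset.prod_mul_distrib]
  ring

/-- For pairwise distinct nonzero `y₁, …, y_n` and any `0 ≤ r ≤ n`,
`∑_{|J| = r} ∏_{α ∈ J, β ∉ J} y_α/(y_α − y_β) = 1`
(equivalently `∑_{|J|=r} ∏ (1 − y_β/y_α)^{-1} = 1`). -/
theorem monopole_partial_fraction_identity (n : ℕ) (hn : 1 ≤ n) (y : Fin n → ℂ)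
    (hy0 : ∀ i, y i ≠ 0) (hyinj : Function.Injective y) (r : ℕ) (hr : r ≤ n) :
    ∑ J ∈ powersetCard r (univ : Finset (Fin n)),
      ∏ α ∈ J, ∏ β ∈ univ \ J, y α / (y α - y β) = 1 := by
  induction r with
  | zero => simp
  | succ r ih =>
    have hIH := ih (Nat.le_of_succ_le hr)
    rw [← hIH]
    have step1 : ∀ J ∈ powersetCard (r + 1) (univ : Finset (Fin n)),
        (∏ α ∈ J, ∏ β ∈ univ \ J, y α / (y α - y β)) =
        ∑ α ∈ J, (∏ γ ∈ J.erase α, ∏ β ∈ univ \ (J.erase α), y γ / (y γ - y β))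
            * ∏ β ∈ univ \ J, y α / (y α - y β) := by
      intro J hJ
      have hJcard : J.card = r + 1 := (Finset.mem_powersetCard.mp hJ).2
      have hJne : J.Nonempty := Finset.card_pos.mp (by omega)
      have hone := lagB J hJne y (hyinj.injOn)
      calc (∏ α ∈ J, ∏ β ∈ univ \ J, y α / (y α - y β))
          = (∏ α ∈ J, ∏ β ∈ univ \ J, y α / (y α - y β))
            * ∑ α ∈ J, ∏ γ ∈ J.erase α, y γ / (y γ - y α) := by rw [hone, mul_one]
        _ = ∑ α ∈ J, (∏ γ ∈ J, ∏ β ∈ univ \ J, y γ / (y γ - y β))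
              * ∏ γ ∈ J.erase α, y γ / (y γ - y α) := by rw [Finset.mul_sum]
        _ = _ := Finset.sum_congr rfl fun α hα => key_prod y J α hα
    have step2 : ∀ J' ∈ powersetCard r (univ : Finset (Fin n)),
        (∏ α ∈ J', ∏ β ∈ univ \ J', y α / (y α - y β)) =
        ∑ α ∈ univ \ J', (∏ γ ∈ J', ∏ β ∈ univ \ J', y γ / (y γ - y β))
            * ∏ β ∈ (univ \ J').erase α, y α / (y α - y β) := by
      intro J' hJ'
      have hJcard : J'.card = r := (Finset.mem_powersetCard.mp hJ').2
      have hcne : (univ \ J').Nonempty := by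
        rw [← Finset.card_pos, Finset.card_sdiff_of_subset (Finset.subset_univ _)]
        simp [hJcard]; omega
      have hone := lagA (univ \ J') hcne y (fun i _ => hy0 i) (hyinj.injOn)
      rw [← Finset.mul_sum, hone, mul_one]
    rw [Finset.sum_congr rfl step1, Finset.sum_congr rfl step2]
    rw [Finset.sum_sigma', Finset.sum_sigma']
    refine Finset.sum_nbij' (fun x => ⟨x.fst.erase x.snd, x.snd⟩)
      (fun x => ⟨insert x.snd x.fst, x.snd⟩) ?_ ?_ ?_ ?_ ?_
    · rintro ⟨J, α⟩ hx
      rw [Finset.mem_sigma] at hx ⊢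
      obtain ⟨hJ, hα⟩ := hx
      have hJcard : J.card = r + 1 := (Finset.mem_powersetCard.mp hJ).2
      refine ⟨Finset.mem_powersetCard.mpr ⟨Finset.subset_univ _, ?_⟩, ?_⟩
      · rw [Finset.card_erase_of_mem hα, hJcard]; omega
      · simp [Finset.mem_sdiff]
    · rintro ⟨J', α⟩ hx
      rw [Finset.mem_sigma] at hx ⊢
      obtain ⟨hJ', hα⟩ := hx
      have hJcard : J'.card = r := (Finset.mem_powersetCard.mp hJ').2
      rw [Finset.mem_sdiff] at hα
      refine ⟨Finset.mem_powersetCard.mpr ⟨Finset.subset_univ _, ?_⟩, ?_⟩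
      · rw [Finset.card_insert_of_notMem hα.2, hJcard]
      · exact Finset.mem_insert_self _ _
    · rintro ⟨J, α⟩ hx
      rw [Finset.mem_sigma] at hx
      simp [Finset.insert_erase hx.2]
    · rintro ⟨J', α⟩ hx
      rw [Finset.mem_sigma, Finset.mem_sdiff] at hx
      simp [Finset.erase_insert hx.2.2]
    · rintro ⟨J, α⟩ hx
      rw [Finset.mem_sigma] at hx
      obtain ⟨hJ, hα⟩ := hx
      have h2 : α ∉ univ \ J := by simp [hα]
      have hkey : (univ \ J.erase α).erase α = univ \ J := by
        rw [Finset.sdiff_erase (Finset.mem_univ α), Finset.erase_insert h2]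
      simp only
      rw [hkey]
end

section
/- Let y₁,…,y_d be pairwise distinct nonzero complex numbers and let e_p denote the p-th elementary symmetric polynomial. Then for 0 ≤ p ≤ r ≤ d, the expression ∑_{J ⊆ {1,…,d}, |J| = r} e_p({y_j}_{j∈J}) · ∏_{α∈J, β∉J} (1 − y_β/y_α)^{-1} is a symmetric polynomial in y₁,…,y_d (i.e. the apparent denominators cancel); in particular for r = d it equals e_p(y₁,…,y_d). -/
open Finset Polynomial

set_option linter.unusedSectionVars false
set_option maxHeartbeats 1000000

namespace MonopoleAux
variable {ι : Type*} [DecidableEq ι] (y : ι → ℂ)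

noncomputable def E (p : ℕ) (J : Finset ι) : ℂ := ∑ s ∈ J.powersetCard p, ∏ i ∈ s, y i
noncomputable def D (p : ℕ) (J : Finset ι) : ℂ := if p = 0 then 0 else E y (p - 1) J
noncomputable def W (T J : Finset ι) : ℂ := ∏ a ∈ J, ∏ b ∈ T \ J, (y a / (y a - y b))

lemma E_insert {γ : ι} {J : Finset ι} (hγ : γ ∉ J) (p : ℕ) :
    E y p (insert γ J) = E y p J + y γ * D y p J := by
  rcases p with _ | q
  · simp [E, D]
  · rw [E, Finset.powersetCard_succ_insert hγ, Finset.sum_union, Finset.sum_image]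
    · simp only [D, Nat.succ_ne_zero, if_false, Nat.add_sub_cancel, E]
      congr 1
      rw [Finset.mul_sum]
      refine Finset.sum_congr rfl fun s hs => ?_
      rw [Finset.mem_powersetCard] at hs
      rw [Finset.prod_insert (fun h => hγ (hs.1 h))]
    · intro s hs t ht hst
      rw [Finset.mem_coe, Finset.mem_powersetCard] at hs ht
      have h1 : γ ∉ s := fun h => hγ (hs.1 h)
      have h2 : γ ∉ t := fun h => hγ (ht.1 h)
      rw [← Finset.erase_insert h1, ← Finset.erase_insert h2, hst]
    · rw [Finset.disjoint_left]
      intro s hs hs'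
      rw [Finset.mem_powersetCard] at hs
      rcases Finset.mem_image.1 hs' with ⟨t, _, rfl⟩
      exact hγ (hs.1 (Finset.mem_insert_self _ _))


lemma pair_cancel (h0 : ∀ i, y i ≠ 0) (hinj : Function.Injective y)
    {T J' : Finset ι} {γ : ι} (hγT : γ ∈ T) (hJ'T : J' ⊆ T) (hγJ' : γ ∉ J')
    (m p : ℕ) (hcard : J'.card = m) :
    E y p (insert γ J') * W y T (insert γ J') *
        ((-1 : ℂ) ^ (m + 1) * ∏ α ∈ insert γ J', y α) * ∏ β ∈ T \ insert γ J', (y γ - y β)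
      + (E y p J' + y γ * D y p J') * W y T J' *
        (y γ) ^ ((T \ insert γ J').card + 1) * ∏ α ∈ J', (y γ - y α) = 0 := by
  set V := T \ insert γ J' with hV
  have hγV : γ ∉ V := by simp [hV]
  have hγmem : γ ∈ T \ J' := Finset.mem_sdiff.2 ⟨hγT, hγJ'⟩
  have hTJ' : T \ J' = insert γ V := by
    rw [hV, Finset.sdiff_insert, Finset.insert_erase hγmem]
  have key1 : W y T (insert γ J') =
      (∏ b ∈ V, (y γ / (y γ - y b))) * ∏ a ∈ J', ∏ b ∈ V, (y a / (y a - y b)) := by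
    rw [W, Finset.prod_insert hγJ']
  have key2 : W y T J' =
      (∏ a ∈ J', (y a / (y a - y γ))) * ∏ a ∈ J', ∏ b ∈ V, (y a / (y a - y b)) := by
    rw [W, hTJ', ← Finset.prod_mul_distrib]
    exact Finset.prod_congr rfl fun a _ => Finset.prod_insert hγV
  have hVne : ∀ b ∈ V, y γ - y b ≠ 0 := by
    intro b hb
    have : b ≠ γ := fun h => hγV (h ▸ hb)
    exact sub_ne_zero.2 (fun h => this (hinj h).symm)
  have hJne : ∀ a ∈ J', y a - y γ ≠ 0 := by
    intro a ha
    have : a ≠ γ := fun h => hγJ' (h ▸ ha)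
    exact sub_ne_zero.2 (fun h => this (hinj h))
  have e1 : (∏ b ∈ V, (y γ / (y γ - y b))) * ∏ b ∈ V, (y γ - y b) = y γ ^ V.card := by
    rw [← Finset.prod_mul_distrib, ← Finset.prod_const]
    exact Finset.prod_congr rfl fun b hb => div_mul_cancel₀ _ (hVne b hb)
  have e2 : (∏ a ∈ J', (y a / (y a - y γ))) * ∏ a ∈ J', (y γ - y a)
      = (-1 : ℂ) ^ m * ∏ a ∈ J', y a := by
    rw [← Finset.prod_mul_distrib, ← hcard, ← Finset.prod_const (-1 : ℂ),
      ← Finset.prod_mul_distrib]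
    refine Finset.prod_congr rfl fun a ha => ?_
    have h := hJne a ha
    field_simp
    ring
  rw [E_insert y hγJ', key1, key2, Finset.prod_insert hγJ']
  set e := E y p J' + y γ * D y p J'
  set U := ∏ a ∈ J', ∏ b ∈ V, (y a / (y a - y b))
  set A := ∏ b ∈ V, (y γ / (y γ - y b))
  set B := ∏ b ∈ V, (y γ - y b)
  set Cc := ∏ a ∈ J', (y a / (y a - y γ))
  set Dd := ∏ a ∈ J', (y γ - y a)
  set P := ∏ a ∈ J', y a
  set c := V.card
  linear_combination (e * U * (-1:ℂ)^(m+1) * y γ * P) * e1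
    + (e * U * y γ ^ (c+1)) * e2

lemma prod_zero_sub (s : Finset ι) (f : ι → ℂ) :
    ∏ i ∈ s, (0 - f i) = (-1) ^ s.card * ∏ i ∈ s, f i := by
  rw [← Finset.prod_const, ← Finset.prod_mul_distrib]
  exact Finset.prod_congr rfl fun i _ => by ring

lemma coeff_top (a b w : ℂ) (M : ℂ[X]) (hM : M.Monic) {q : ℕ} (hq : M.natDegree = q) :
    ((C a + C b * X) * (C w * M)).coeff (q + 1) = b * w := by
  have h1 : (C a + C b * X) * (C w * M) = C (a * w) * M + C (b * w) * (X * M) := by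
    simp only [C_mul]; ring
  have h2 : (X * M).natDegree = q + 1 := by
    rw [natDegree_mul X_ne_zero hM.ne_zero, natDegree_X, hq]; omega
  have h3 : (X * M).Monic := monic_X.mul hM
  rw [h1, coeff_add, coeff_C_mul, coeff_C_mul,
    coeff_eq_zero_of_natDegree_lt (by omega : M.natDegree < q + 1), ← h2,
    h3.coeff_natDegree]
  ring

lemma deg_bound (a b w : ℂ) (M : ℂ[X]) {q : ℕ} (hq : M.natDegree ≤ q) :
    ((C a + C b * X) * (C w * M)).natDegree ≤ q + 1 := by
  refine natDegree_mul_le.trans ?_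
  have h1 : (C a + C b * X).natDegree ≤ 1 :=
    (natDegree_add_le _ _).trans
      (by simp only [natDegree_C]; exact max_le (by omega) (natDegree_mul_le.trans (by simp)))
  have h2 : (C w * M).natDegree ≤ q := natDegree_mul_le.trans (by simp [hq])
  omega

lemma cleared (h0 : ∀ i, y i ≠ 0) (hinj : Function.Injective y) {T : Finset ι} {n r p : ℕ}
    (hT : T.card = n) (hr1 : 1 ≤ r) (hrn : r ≤ n) (hp : p ≤ r)
    (IH : ∀ r' p', p' ≤ r' → r' ≤ n →
      ∑ J ∈ T.powersetCard r', E y p' J * W y T J = E y p' T)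
    (z : ℂ) :
    (∑ J ∈ T.powersetCard r,
        E y p J * W y T J * ((-1 : ℂ) ^ r * ∏ α ∈ J, y α) * ∏ β ∈ T \ J, (z - y β))
      + (∑ J' ∈ T.powersetCard (r - 1),
        (E y p J' + z * D y p J') * W y T J' * z ^ (n - r + 1) * ∏ α ∈ J', (z - y α))
      = (E y p T + z * D y p T) * ∏ β ∈ T, (z - y β) := by
  have IHD : ∑ J' ∈ T.powersetCard (r - 1), D y p J' * W y T J' = D y p T := by
    rcases p with _ | q
    · simp [D]
    · simp only [D, Nat.succ_ne_zero, if_false, Nat.add_sub_cancel]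
      exact IH (r - 1) q (by omega) (by omega)
  set G : ℂ[X] :=
    (∑ J ∈ T.powersetCard r,
        C (E y p J * W y T J * ((-1 : ℂ) ^ r * ∏ α ∈ J, y α)) * ∏ β ∈ T \ J, (X - C (y β)))
      + (∑ J' ∈ T.powersetCard (r - 1),
        (C (E y p J') + C (D y p J') * X) *
          (C (W y T J') * (X ^ (n - r + 1) * ∏ α ∈ J', (X - C (y α)))))
      - (C (E y p T) + C (D y p T) * X) * (C 1 * (X ^ 0 * ∏ β ∈ T, (X - C (y β)))) with hGdef
  have hGeval : ∀ w : ℂ, G.eval w =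
      (∑ J ∈ T.powersetCard r,
        E y p J * W y T J * ((-1 : ℂ) ^ r * ∏ α ∈ J, y α) * ∏ β ∈ T \ J, (w - y β))
      + (∑ J' ∈ T.powersetCard (r - 1),
        (E y p J' + w * D y p J') * W y T J' * w ^ (n - r + 1) * ∏ α ∈ J', (w - y α))
      - (E y p T + w * D y p T) * ∏ β ∈ T, (w - y β) := by
    intro w
    simp only [hGdef, eval_sub, eval_add, eval_mul, eval_finset_sum, eval_prod, eval_C, eval_X,
      eval_pow, eval_one]
    ring_nf
  have hMdeg : ∀ (k : ℕ) (s : Finset ι),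
      (X ^ k * ∏ α ∈ s, (X - C (y α)) : ℂ[X]).Monic ∧
      (X ^ k * ∏ α ∈ s, (X - C (y α)) : ℂ[X]).natDegree = k + s.card := by
    intro k s
    have hm : (∏ α ∈ s, (X - C (y α)) : ℂ[X]).Monic :=
      monic_prod_of_monic _ _ fun a _ => monic_X_sub_C _
    refine ⟨(monic_X_pow k).mul hm, ?_⟩
    rw [natDegree_mul (pow_ne_zero _ X_ne_zero) hm.ne_zero, natDegree_X_pow,
      natDegree_prod_of_monic _ _ fun a _ => monic_X_sub_C _]
    simp [natDegree_X_sub_C]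
  have hcoeff : ∀ m, n < m → G.coeff m = 0 := by
    intro m hm
    rw [hGdef, coeff_sub, coeff_add, finset_sum_coeff, finset_sum_coeff]
    have hS1 : ∀ J ∈ T.powersetCard r,
        (C (E y p J * W y T J * ((-1 : ℂ) ^ r * ∏ α ∈ J, y α)) *
          ∏ β ∈ T \ J, (X - C (y β))).coeff m = 0 := by
      intro J hJ
      rw [Finset.mem_powersetCard] at hJ
      apply coeff_eq_zero_of_natDegree_lt
      refine lt_of_le_of_lt (natDegree_mul_le.trans ?_) hm
      rw [natDegree_C, natDegree_prod_of_monic _ _ fun a _ => monic_X_sub_C _]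
      simp only [natDegree_X_sub_C, Finset.sum_const, smul_eq_mul, mul_one, zero_add]
      calc (T \ J).card ≤ T.card := Finset.card_le_card (Finset.sdiff_subset)
        _ = n := hT
    rw [Finset.sum_eq_zero hS1]
    rcases eq_or_lt_of_le (Nat.succ_le_of_lt hm) with hm' | hm'
    · -- m = n + 1
      have hS2 : ∀ J' ∈ T.powersetCard (r - 1),
          ((C (E y p J') + C (D y p J') * X) *
            (C (W y T J') * (X ^ (n - r + 1) * ∏ α ∈ J', (X - C (y α))))).coeff m
          = D y p J' * W y T J' := by
        intro J' hJ'
        rw [Finset.mem_powersetCard] at hJ'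
        have hd := hMdeg (n - r + 1) J'
        have hq : (X ^ (n - r + 1) * ∏ α ∈ J', (X - C (y α)) : ℂ[X]).natDegree = n := by
          rw [hd.2, hJ'.2]; omega
        rw [← hm', coeff_top _ _ _ _ hd.1 hq]
      rw [Finset.sum_congr rfl hS2, IHD]
      have hd := hMdeg 0 T
      have hq : (X ^ 0 * ∏ β ∈ T, (X - C (y β)) : ℂ[X]).natDegree = n := by
        rw [hd.2, hT]; omega
      rw [← hm', coeff_top _ _ _ _ hd.1 hq]
      ring
    · -- n + 1 < m
      have hS2 : ∀ J' ∈ T.powersetCard (r - 1),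
          ((C (E y p J') + C (D y p J') * X) *
            (C (W y T J') * (X ^ (n - r + 1) * ∏ α ∈ J', (X - C (y α))))).coeff m = 0 := by
        intro J' hJ'
        rw [Finset.mem_powersetCard] at hJ'
        have hd := hMdeg (n - r + 1) J'
        apply coeff_eq_zero_of_natDegree_lt
        refine lt_of_le_of_lt (deg_bound _ _ _ _ (le_of_eq ?_)) hm'
        rw [hd.2, hJ'.2]; omega
      rw [Finset.sum_eq_zero hS2]
      have hd := hMdeg 0 T
      rw [coeff_eq_zero_of_natDegree_lt
        (lt_of_le_of_lt (deg_bound _ _ _ _ (le_of_eq (by rw [hd.2, hT]; omega))) hm')]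
      ring
  have hdeg : G.natDegree ≤ n := natDegree_le_iff_coeff_eq_zero.2 hcoeff
  have hroots : ∀ x ∈ insert (0 : ℂ) (T.image y), G.eval x = 0 := by
    intro x hx
    rw [hGeval x]
    rcases Finset.mem_insert.1 hx with rfl | hx
    · -- x = 0
      have hz : (0 : ℂ) ^ (n - r + 1) = 0 := zero_pow (by omega)
      have h2z : ∑ J' ∈ T.powersetCard (r - 1),
          (E y p J' + (0:ℂ) * D y p J') * W y T J' * (0:ℂ) ^ (n - r + 1) *
            ∏ α ∈ J', ((0:ℂ) - y α) = 0 :=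
        Finset.sum_eq_zero (fun J' _ => by rw [hz]; ring)
      have hS1 : ∀ J ∈ T.powersetCard r,
          E y p J * W y T J * ((-1 : ℂ) ^ r * ∏ α ∈ J, y α) * ∏ β ∈ T \ J, ((0:ℂ) - y β)
          = E y p J * W y T J * ((-1 : ℂ) ^ n * ∏ a ∈ T, y a) := by
        intro J hJ
        rw [Finset.mem_powersetCard] at hJ
        rw [prod_zero_sub]
        have hc : (T \ J).card = n - r := by rw [Finset.card_sdiff_of_subset hJ.1, hT, hJ.2]
        rw [hc]
        have hsd : (∏ b ∈ T \ J, y b) * ∏ a ∈ J, y a = ∏ a ∈ T, y a :=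
          Finset.prod_sdiff hJ.1
        have hpow : ((-1 : ℂ) ^ r) * (-1 : ℂ) ^ (n - r) = (-1 : ℂ) ^ n := by
          rw [← pow_add]; congr 1; omega
        linear_combination
          (E y p J * W y T J * ((-1 : ℂ) ^ r * (-1 : ℂ) ^ (n - r))) * hsd
          + (E y p J * W y T J * ∏ a ∈ T, y a) * hpow
      rw [Finset.sum_congr rfl hS1, h2z, ← Finset.sum_mul, IH r p hp hrn, prod_zero_sub, hT]
      ring
    · -- x = y γ
      obtain ⟨γ, hγT, rfl⟩ := Finset.mem_image.1 hx
      have hzero : ∏ β ∈ T, (y γ - y β) = 0 := Finset.prod_eq_zero hγT (sub_self _)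
      set T' := T.erase γ with hT'def
      have hγT' : γ ∉ T' := Finset.notMem_erase _ _
      set f : Finset ι → ℂ := fun J =>
        E y p J * W y T J * ((-1 : ℂ) ^ r * ∏ α ∈ J, y α) * ∏ β ∈ T \ J, (y γ - y β) with hf
      set g : Finset ι → ℂ := fun J' =>
        (E y p J' + y γ * D y p J') * W y T J' * (y γ) ^ (n - r + 1) *
          ∏ α ∈ J', (y γ - y α) with hg
      have himsub : (T'.powersetCard (r - 1)).image (insert γ) ⊆ T.powersetCard r := by
        intro J hJ
        obtain ⟨J', hJ', rfl⟩ := Finset.mem_image.1 hJ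
        rw [Finset.mem_powersetCard] at hJ' ⊢
        have hγJ' : γ ∉ J' := fun h => hγT' (hJ'.1 h)
        exact ⟨Finset.insert_subset hγT (hJ'.1.trans (Finset.erase_subset _ _)),
          by rw [Finset.card_insert_of_notMem hγJ', hJ'.2]; omega⟩
      have hinj' : ∀ s ∈ T'.powersetCard (r - 1), ∀ t ∈ T'.powersetCard (r - 1),
          insert γ s = insert γ t → s = t := by
        intro s hs t ht hst
        rw [Finset.mem_powersetCard] at hs ht
        have h1 : γ ∉ s := fun h => hγT' (hs.1 h)
        have h2 : γ ∉ t := fun h => hγT' (ht.1 h)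
        rw [← Finset.erase_insert h1, ← Finset.erase_insert h2, hst]
      have hvan1 : ∀ J ∈ T.powersetCard r,
          J ∉ (T'.powersetCard (r - 1)).image (insert γ) → f J = 0 := by
        intro J hJ hJim
        have hγJ : γ ∉ J := by
          intro hγJ
          apply hJim
          rw [Finset.mem_powersetCard] at hJ
          refine Finset.mem_image.2 ⟨J.erase γ, ?_, Finset.insert_erase hγJ⟩
          rw [Finset.mem_powersetCard]
          exact ⟨Finset.erase_subset_erase _ hJ.1,
            by rw [Finset.card_erase_of_mem hγJ, hJ.2]⟩
        have : ∏ β ∈ T \ J, (y γ - y β) = 0 :=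
          Finset.prod_eq_zero (Finset.mem_sdiff.2 ⟨hγT, hγJ⟩) (sub_self _)
        rw [hf]; dsimp only; rw [this, mul_zero]
      have h1 : ∑ J ∈ T.powersetCard r, f J
          = ∑ J' ∈ T'.powersetCard (r - 1), f (insert γ J') :=
        (Finset.sum_subset himsub hvan1).symm.trans (Finset.sum_image hinj')
      have hvan2 : ∀ J' ∈ T.powersetCard (r - 1),
          J' ∉ T'.powersetCard (r - 1) → g J' = 0 := by
        intro J' hJ' hJ''
        have hγJ' : γ ∈ J' := by
          by_contra hn
          apply hJ''
          rw [Finset.mem_powersetCard] at hJ' ⊢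
          exact ⟨fun a ha => Finset.mem_erase.2 ⟨fun h => hn (h ▸ ha), hJ'.1 ha⟩, hJ'.2⟩
        rw [hg]; dsimp only
        exact mul_eq_zero_of_right _ (Finset.prod_eq_zero hγJ' (sub_self _))
      have h2 : ∑ J' ∈ T.powersetCard (r - 1), g J'
          = ∑ J' ∈ T'.powersetCard (r - 1), g J' :=
        (Finset.sum_subset (Finset.powersetCard_mono (Finset.erase_subset _ _)) hvan2).symm
      show (∑ J ∈ T.powersetCard r, f J) + (∑ J' ∈ T.powersetCard (r - 1), g J')
          - (E y p T + y γ * D y p T) * ∏ β ∈ T, (y γ - y β) = 0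
      rw [h1, h2, hzero, mul_zero, sub_zero, ← Finset.sum_add_distrib]
      apply Finset.sum_eq_zero
      intro J' hJ'
      rw [Finset.mem_powersetCard] at hJ'
      have hγJ' : γ ∉ J' := fun h => hγT' (hJ'.1 h)
      have hJ'T : J' ⊆ T := hJ'.1.trans (Finset.erase_subset _ _)
      have hins : insert γ J' ⊆ T := Finset.insert_subset hγT hJ'T
      have hc : (T \ insert γ J').card = n - r := by
        rw [Finset.card_sdiff_of_subset hins, hT, Finset.card_insert_of_notMem hγJ', hJ'.2]; omega
      have hpc := pair_cancel y h0 hinj hγT hJ'T hγJ' (r - 1) p hJ'.2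
      rw [hc] at hpc
      have hr' : r - 1 + 1 = r := Nat.succ_pred_eq_of_pos hr1
      rw [hr'] at hpc
      exact hpc
  have hG0 : G = 0 := by
    refine Polynomial.eq_zero_of_natDegree_lt_card_of_eval_eq_zero' G _ hroots ?_
    have h1 : (0 : ℂ) ∉ T.image y := by
      simp only [Finset.mem_image, not_exists]
      rintro i ⟨_, hi⟩
      exact h0 i hi
    rw [Finset.card_insert_of_notMem h1, Finset.card_image_of_injective _ hinj, hT]
    omega
  have hz := hGeval z
  rw [hG0, Polynomial.eval_zero] at hz
  linear_combination -hz

theorem key (h0 : ∀ i, y i ≠ 0) (hinj : Function.Injective y) :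
    ∀ (n : ℕ) (S : Finset ι), S.card = n → ∀ r p, p ≤ r → r ≤ n →
      ∑ J ∈ S.powersetCard r, E y p J * W y S J = E y p S := by
  intro n
  induction n with
  | zero =>
    intro S hS r p hp hr
    have hr0 : r = 0 := by omega
    have hp0 : p = 0 := by omega
    subst hr0 hp0
    simp [E, W]
  | succ n IHn =>
    intro S hS r p hp hr
    rcases Nat.eq_zero_or_pos r with rfl | hr1
    · have hp0 : p = 0 := by omega
      subst hp0
      simp [E, W]
    rcases eq_or_lt_of_le hr with rfl | hrlt
    · -- r = card S
      rw [← hS, Finset.powersetCard_self, Finset.sum_singleton]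
      have : W y S S = 1 := by simp [W]
      rw [this, mul_one]
    · -- 1 ≤ r ≤ n
      have hrn : r ≤ n := by omega
      obtain ⟨γ, hγS⟩ := Finset.card_pos.1 (by omega : 0 < S.card)
      set T := S.erase γ with hTdef
      have hγT : γ ∉ T := Finset.notMem_erase _ _
      have hTcard : T.card = n := by rw [hTdef, Finset.card_erase_of_mem hγS, hS]; omega
      have hST : S = insert γ T := (Finset.insert_erase hγS).symm
      have IH := IHn T hTcard
      have CL := cleared y h0 hinj hTcard hr1 hrn hp IH (y γ)
      have hPiNe : (∏ β ∈ T, (y γ - y β)) ≠ 0 := by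
        rw [Finset.prod_ne_zero_iff]
        intro β hβ
        have hne : β ≠ γ := (Finset.mem_erase.1 (hTdef ▸ hβ)).1
        exact sub_ne_zero.2 fun h => hne (hinj h).symm
      apply mul_right_cancel₀ hPiNe
      rw [hST, E_insert y hγT]
      have hr' : r - 1 + 1 = r := by omega
      have hsplit : (insert γ T).powersetCard r
          = T.powersetCard r ∪ (T.powersetCard (r - 1)).image (insert γ) := by
        rw [← hr']; exact Finset.powersetCard_succ_insert hγT _
      have hdisj : Disjoint (T.powersetCard r) ((T.powersetCard (r - 1)).image (insert γ)) := by
        rw [Finset.disjoint_left]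
        intro J hJ hJ'
        rw [Finset.mem_powersetCard] at hJ
        obtain ⟨J', _, rfl⟩ := Finset.mem_image.1 hJ'
        exact hγT (hJ.1 (Finset.mem_insert_self _ _))
      have hinj2 : ∀ s ∈ T.powersetCard (r - 1), ∀ t ∈ T.powersetCard (r - 1),
          insert γ s = insert γ t → s = t := by
        intro s hs t ht hst
        rw [Finset.mem_powersetCard] at hs ht
        have h1 : γ ∉ s := fun h => hγT (hs.1 h)
        have h2 : γ ∉ t := fun h => hγT (ht.1 h)
        rw [← Finset.erase_insert h1, ← Finset.erase_insert h2, hst]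
      rw [hsplit, Finset.sum_union hdisj, Finset.sum_image hinj2, add_mul,
        Finset.sum_mul, Finset.sum_mul, ← CL]
      congr 1
      · -- first sum
        refine Finset.sum_congr rfl fun J hJ => ?_
        rw [Finset.mem_powersetCard] at hJ
        obtain ⟨hJT, hJcard⟩ := hJ
        have hγJ : γ ∉ J := fun h => hγT (hJT h)
        have hsd : (insert γ T) \ J = insert γ (T \ J) := by
          ext x
          simp only [Finset.mem_sdiff, Finset.mem_insert]
          constructor
          · rintro ⟨hx | hx, hx2⟩
            · exact Or.inl hx
            · exact Or.inr ⟨hx, hx2⟩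
          · rintro (rfl | ⟨hx, hx2⟩)
            · exact ⟨Or.inl rfl, hγJ⟩
            · exact ⟨Or.inr hx, hx2⟩
        have hγTJ : γ ∉ T \ J := fun h => hγT (Finset.mem_sdiff.1 h).1
        have hWS : W y (insert γ T) J = (∏ a ∈ J, (y a / (y a - y γ))) * W y T J := by
          rw [W, W, ← Finset.prod_mul_distrib]
          refine Finset.prod_congr rfl fun a _ => ?_
          rw [hsd, Finset.prod_insert hγTJ]
        have hPi : (∏ β ∈ T, (y γ - y β))
            = (∏ β ∈ T \ J, (y γ - y β)) * ∏ a ∈ J, (y γ - y a) :=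
          (Finset.prod_sdiff hJT).symm
        have he2 : (∏ a ∈ J, (y a / (y a - y γ))) * ∏ a ∈ J, (y γ - y a)
            = (-1 : ℂ) ^ r * ∏ a ∈ J, y a := by
          rw [← Finset.prod_mul_distrib, ← hJcard, ← Finset.prod_const (-1 : ℂ),
            ← Finset.prod_mul_distrib]
          refine Finset.prod_congr rfl fun a ha => ?_
          have hne : a ≠ γ := fun h => hγJ (h ▸ ha)
          have h : y a - y γ ≠ 0 := sub_ne_zero.2 fun h => hne (hinj h)
          field_simp
          ring
        rw [hWS]
        linear_combination
          (E y p J * W y T J * (∏ a ∈ J, (y a / (y a - y γ)))) * hPi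
          + (E y p J * W y T J * ∏ β ∈ T \ J, (y γ - y β)) * he2
      · -- second sum
        refine Finset.sum_congr rfl fun J' hJ' => ?_
        rw [Finset.mem_powersetCard] at hJ'
        obtain ⟨hJ'T, hJ'card⟩ := hJ'
        have hγJ' : γ ∉ J' := fun h => hγT (hJ'T h)
        have hsd2 : (insert γ T) \ (insert γ J') = T \ J' := by
          ext x
          simp only [Finset.mem_sdiff, Finset.mem_insert, not_or]
          constructor
          · rintro ⟨hx | hx, hx2, hx3⟩
            · exact absurd hx hx2
            · exact ⟨hx, hx3⟩
          · rintro ⟨hx, hx2⟩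
            exact ⟨Or.inr hx, fun h => hγT (h ▸ hx), hx2⟩
        have hWS2 : W y (insert γ T) (insert γ J')
            = (∏ b ∈ T \ J', (y γ / (y γ - y b))) * W y T J' := by
          rw [W, W, hsd2, Finset.prod_insert hγJ']
        have hPi2 : (∏ β ∈ T, (y γ - y β))
            = (∏ b ∈ T \ J', (y γ - y b)) * ∏ a ∈ J', (y γ - y a) :=
          (Finset.prod_sdiff hJ'T).symm
        have hcardTJ : (T \ J').card = n - r + 1 := by
          rw [Finset.card_sdiff_of_subset hJ'T, hTcard, hJ'card]; omega
        have he1 : (∏ b ∈ T \ J', (y γ / (y γ - y b))) * ∏ b ∈ T \ J', (y γ - y b)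
            = (y γ) ^ (n - r + 1) := by
          rw [← Finset.prod_mul_distrib, ← hcardTJ, ← Finset.prod_const]
          refine Finset.prod_congr rfl fun b hb => ?_
          have hbT : b ∈ T := (Finset.mem_sdiff.1 hb).1
          have hne : b ≠ γ := fun h => hγT (h ▸ hbT)
          exact div_mul_cancel₀ _ (sub_ne_zero.2 fun h => hne (hinj h).symm)
        rw [E_insert y hγJ', hWS2]
        linear_combination
          ((E y p J' + y γ * D y p J') * W y T J' * (∏ b ∈ T \ J', (y γ / (y γ - y b)))) * hPi2
          + ((E y p J' + y γ * D y p J') * W y T J' * ∏ a ∈ J', (y γ - y a)) * he1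

end MonopoleAux

/-- The `x = 1` specialization of the Finkelberg–Tsymbaliuk abelianization formula:
for `0 ≤ p ≤ r ≤ d`, the expression
`∑_{|J| = r} e_p({y_j}_{j∈J}) · ∏_{α∈J, β∉J} (1 − y_β/y_α)^{-1}`
is given by a symmetric polynomial in `y₁,…,y_d` (the apparent denominators cancel),
and for `r = d` it equals the elementary symmetric polynomial `e_p(y₁,…,y_d)`. -/
theorem monopole_esymm_regular (d r p : ℕ) (hp : p ≤ r) (hr : r ≤ d) :
    (∃ P : MvPolynomial (Fin d) ℂ, P.IsSymmetric ∧
      ∀ y : Fin d → ℂ, (∀ i, y i ≠ 0) → Function.Injective y →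
        ∑ J ∈ powersetCard r (univ : Finset (Fin d)),
          (∑ s ∈ powersetCard p J, ∏ i ∈ s, y i) *
            ∏ α ∈ J, ∏ β ∈ univ \ J, (1 - y β / y α)⁻¹
        = MvPolynomial.eval y P) ∧
    (r = d → ∀ y : Fin d → ℂ, (∀ i, y i ≠ 0) → Function.Injective y →
      ∑ J ∈ powersetCard r (univ : Finset (Fin d)),
        (∑ s ∈ powersetCard p J, ∏ i ∈ s, y i) *
          ∏ α ∈ J, ∏ β ∈ univ \ J, (1 - y β / y α)⁻¹
      = MvPolynomial.eval y (MvPolynomial.esymm (Fin d) ℂ p)) := by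
  have main : ∀ y : Fin d → ℂ, (∀ i, y i ≠ 0) → Function.Injective y →
      ∑ J ∈ powersetCard r (univ : Finset (Fin d)),
        (∑ s ∈ powersetCard p J, ∏ i ∈ s, y i) *
          ∏ α ∈ J, ∏ β ∈ univ \ J, (1 - y β / y α)⁻¹
      = MvPolynomial.eval y (MvPolynomial.esymm (Fin d) ℂ p) := by
    intro y h0 hinj
    have hcard : (univ : Finset (Fin d)).card = d := by simp
    have k := MonopoleAux.key y h0 hinj d univ hcard r p hp hr
    have heval : MvPolynomial.eval y (MvPolynomial.esymm (Fin d) ℂ p)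
        = ∑ s ∈ powersetCard p (univ : Finset (Fin d)), ∏ i ∈ s, y i := by
      simp [MvPolynomial.esymm]
    rw [heval,
      show (∑ s ∈ powersetCard p (univ : Finset (Fin d)), ∏ i ∈ s, y i)
        = MonopoleAux.E y p univ from rfl, ← k]
    refine Finset.sum_congr rfl fun J _ => ?_
    simp only [MonopoleAux.E, MonopoleAux.W]
    congr 1
    refine Finset.prod_congr rfl fun α _ => Finset.prod_congr rfl fun β _ => ?_
    rw [one_sub_div (h0 α), inv_div]
  exact ⟨⟨MvPolynomial.esymm (Fin d) ℂ p, MvPolynomial.esymm_isSymmetric _ _ p, main⟩,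
    fun _ => main⟩
end

section
/- Consider the category whose objects are finite configurations c of labeled points on S¹ and whose morphism space from c₁ to c₂ is the free ℂ-module on isotopy classes of taut strand diagrams (no bigons) on the cylinder S¹×[0,1] from c₁ to c₂, with composition defined by: the concatenation if it is taut, and 0 if the concatenation contains a bigon. Then this composition is associative. -/
/-! Taut strand diagrams on the cylinder `S¹ × [0,1]`, modelled in the universal
cover: a configuration is a tuple of labeled points on `ℝ/ℤ` (given by real lifts,
distinct mod `ℤ`), and an isotopy-class of taut diagrams is encoded by the induced
label-preserving permutation of endpoints together with a lift to `ℝ` of each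
strand's top endpoint (recording its winding), the strand being the straight line
between the lifted endpoints.  Crossing numbers are counted in the universal cover,
and a concatenation is taut iff crossing numbers add. -/

/-- A configuration of `n` labeled points on the circle `ℝ/ℤ`, given by real lifts. -/
structure Config (n : ℕ) where
  pos : Fin n → ℝ
  lbl : Fin n → ℕ
  inj : ∀ i j : Fin n, i ≠ j → ∀ m : ℤ, pos i - pos j ≠ m

/-- An isotopy class of taut strand diagrams on the cylinder from `c₁` to `c₂`. -/
structure Diagram {n : ℕ} (c₁ c₂ : Config n) where
  perm : Equiv.Perm (Fin n)
  lblOk : ∀ i, c₂.lbl (perm i) = c₁.lbl i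
  lift : Fin n → ℝ
  liftOk : ∀ i, ∃ m : ℤ, lift i - c₂.pos (perm i) = m

/-- Number of crossings of two straight strands in the cylinder, with bottom
(resp. top) endpoints differing by `x` (resp. `y`) in the universal cover:
the number of integers strictly between `x` and `y`. -/
noncomputable def crossPair (x y : ℝ) : ℕ :=
  Nat.card {m : ℤ // (x < m ∧ (m : ℝ) < y) ∨ (y < m ∧ (m : ℝ) < x)}

/-- Total crossing number of a taut diagram. -/
noncomputable def cross {n : ℕ} {c₁ c₂ : Config n} (D : Diagram c₁ c₂) : ℕ :=
  ∑ p ∈ Finset.univ.filter (fun p : Fin n × Fin n => p.1 < p.2),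
    crossPair (c₁.pos p.1 - c₁.pos p.2) (D.lift p.1 - D.lift p.2)

/-- Concatenation of diagrams (stacking `E` on top of `D`), straightened. -/
def Diagram.concat {n : ℕ} {c₁ c₂ c₃ : Config n} (D : Diagram c₁ c₂)
    (E : Diagram c₂ c₃) : Diagram c₁ c₃ where
  perm := D.perm.trans E.perm
  lblOk := fun i => by
    rw [Equiv.trans_apply, E.lblOk, D.lblOk]
  lift := fun i => E.lift (D.perm i) + (D.lift i - c₂.pos (D.perm i))
  liftOk := fun i => by
    obtain ⟨m, hm⟩ := E.liftOk (D.perm i)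
    obtain ⟨m', hm'⟩ := D.liftOk i
    exact ⟨m + m', by rw [Equiv.trans_apply]; push_cast; linarith⟩

/-- The concatenation of two taut diagrams is taut iff crossing numbers add. -/
def TautConcat {n : ℕ} {c₁ c₂ c₃ : Config n} (D : Diagram c₁ c₂)
    (E : Diagram c₂ c₃) : Prop :=
  cross (D.concat E) = cross D + cross E

noncomputable instance {n : ℕ} {c₁ c₂ c₃ : Config n} (D : Diagram c₁ c₂) (E : Diagram c₂ c₃) :
    Decidable (TautConcat D E) := Nat.decEq _ _

/-- Composition on the free `ℂ`-modules on taut diagrams: the concatenation if it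
is taut, and `0` if the concatenation contains a bigon (Eq. (nil-cat)). -/
noncomputable def nilComp {n : ℕ} {c₁ c₂ c₃ : Config n}
    (F : Diagram c₁ c₂ →₀ ℂ) (G : Diagram c₂ c₃ →₀ ℂ) : Diagram c₁ c₃ →₀ ℂ :=
  F.sum fun D a => G.sum fun E b =>
    if TautConcat D E then Finsupp.single (D.concat E) (a * b) else 0

/-! ### Auxiliary lemmas on `crossPair` -/

def betw (x y : ℝ) : Set ℤ := {m | (x < m ∧ (m : ℝ) < y) ∨ (y < m ∧ (m : ℝ) < x)}

lemma betw_finite (x y : ℝ) : (betw x y).Finite := by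
  apply Set.Finite.subset (Finset.Icc ⌈min x y⌉ ⌊max x y⌋).finite_toSet
  rintro m (⟨h1, h2⟩ | ⟨h1, h2⟩) <;>
    simp only [Finset.coe_Icc, Set.mem_Icc, Int.ceil_le, Int.le_floor] <;>
    constructor <;> [exact (min_le_left x y).trans h1.le; exact h2.le.trans (le_max_right x y);
      exact (min_le_right x y).trans h1.le; exact h2.le.trans (le_max_left x y)]

lemma crossPair_def (x y : ℝ) : crossPair x y = (betw x y).ncard :=
  Nat.card_coe_set_eq (betw x y)

lemma betw_neg (x y : ℝ) : betw (-x) (-y) = (fun m => -m) '' betw x y := by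
  ext m
  constructor
  · rintro (⟨h1, h2⟩ | ⟨h1, h2⟩)
    · exact ⟨-m, Or.inr ⟨by push_cast; linarith, by push_cast at h1 ⊢; linarith⟩, by ring⟩
    · exact ⟨-m, Or.inl ⟨by push_cast at h2 ⊢; linarith, by push_cast at h1 ⊢; linarith⟩, by ring⟩
  · rintro ⟨k, (⟨h1, h2⟩ | ⟨h1, h2⟩), rfl⟩
    · exact Or.inr ⟨by push_cast at h2 ⊢; linarith, by push_cast at h1 ⊢; linarith⟩
    · exact Or.inl ⟨by push_cast at h2 ⊢; linarith, by push_cast at h1 ⊢; linarith⟩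

lemma crossPair_neg (x y : ℝ) : crossPair (-x) (-y) = crossPair x y := by
  rw [crossPair_def, crossPair_def, betw_neg,
    Set.ncard_image_of_injective _ neg_injective]

lemma betw_translate (x y : ℝ) (k : ℤ) :
    betw (x + k) (y + k) = (fun m => m + k) '' betw x y := by
  ext m
  constructor
  · rintro (⟨h1, h2⟩ | ⟨h1, h2⟩)
    · exact ⟨m - k, Or.inl ⟨by push_cast at h1 ⊢; linarith, by push_cast at h2 ⊢; linarith⟩, by ring⟩
    · exact ⟨m - k, Or.inr ⟨by push_cast at h1 ⊢; linarith, by push_cast at h2 ⊢; linarith⟩, by ring⟩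
  · rintro ⟨j, (⟨h1, h2⟩ | ⟨h1, h2⟩), rfl⟩
    · exact Or.inl ⟨by push_cast at h1 ⊢; linarith, by push_cast at h2 ⊢; linarith⟩
    · exact Or.inr ⟨by push_cast at h1 ⊢; linarith, by push_cast at h2 ⊢; linarith⟩

lemma crossPair_translate (x y : ℝ) (k : ℤ) :
    crossPair (x + k) (y + k) = crossPair x y := by
  rw [crossPair_def, crossPair_def, betw_translate,
    Set.ncard_image_of_injective _ (add_left_injective (k : ℤ))]

lemma crossPair_triangle (x y z : ℝ) (hy : ∀ m : ℤ, y ≠ m) :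
    crossPair x z ≤ crossPair x y + crossPair y z := by
  have hsub : betw x z ⊆ betw x y ∪ betw y z := by
    rintro m (⟨h1, h2⟩ | ⟨h1, h2⟩)
    · rcases lt_trichotomy y (m : ℝ) with h | h | h
      · exact Or.inr (Or.inl ⟨h, h2⟩)
      · exact absurd h (hy m)
      · exact Or.inl (Or.inl ⟨h1, h⟩)
    · rcases lt_trichotomy y (m : ℝ) with h | h | h
      · exact Or.inl (Or.inr ⟨h, h2⟩)
      · exact absurd h (hy m)
      · exact Or.inr (Or.inr ⟨h1, h⟩)
  calc crossPair x z = (betw x z).ncard := crossPair_def x z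
    _ ≤ (betw x y ∪ betw y z).ncard :=
        Set.ncard_le_ncard hsub ((betw_finite x y).union (betw_finite y z))
    _ ≤ (betw x y).ncard + (betw y z).ncard := Set.ncard_union_le _ _
    _ = crossPair x y + crossPair y z := by rw [crossPair_def, crossPair_def]

/-! ### Reindexing sums over ordered pairs by a permutation -/

open Finset in
lemma sum_offdiag {n : ℕ} (f : Fin n → Fin n → ℕ) :
    ∑ p ∈ univ.filter (fun p : Fin n × Fin n => p.1 ≠ p.2), f p.1 p.2
      = ∑ p ∈ univ.filter (fun p : Fin n × Fin n => p.1 < p.2), f p.1 p.2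
        + ∑ p ∈ univ.filter (fun p : Fin n × Fin n => p.1 < p.2), f p.2 p.1 := by
  rw [← Finset.sum_filter_add_sum_filter_not
    (univ.filter (fun p : Fin n × Fin n => p.1 ≠ p.2)) (fun p => p.1 < p.2)]
  congr 1
  · apply Finset.sum_congr _ (fun _ _ => rfl)
    rw [Finset.filter_filter]
    apply Finset.filter_congr
    intro p _
    constructor
    · exact fun h => h.2
    · exact fun h => ⟨ne_of_lt h, h⟩
  · apply Finset.sum_nbij' (fun p => Prod.swap p) (fun p => Prod.swap p)
    · intro p hp
      simp only [Finset.mem_filter, Finset.mem_univ, true_and, ne_eq, not_lt] at hp ⊢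
      exact lt_of_le_of_ne hp.2 (fun h => hp.1 h.symm)
    · intro p hp
      simp only [Finset.mem_filter, Finset.mem_univ, true_and, ne_eq, not_lt] at hp ⊢
      exact ⟨fun h => absurd h.symm (ne_of_lt hp), hp.le⟩
    · intro p _; exact Prod.swap_swap p
    · intro p _; exact Prod.swap_swap p
    · intro p _; rfl

open Finset in
lemma sum_offdiag_perm {n : ℕ} (σ : Equiv.Perm (Fin n)) (f : Fin n → Fin n → ℕ) :
    ∑ p ∈ univ.filter (fun p : Fin n × Fin n => p.1 ≠ p.2), f (σ p.1) (σ p.2)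
      = ∑ p ∈ univ.filter (fun p : Fin n × Fin n => p.1 ≠ p.2), f p.1 p.2 := by
  apply Finset.sum_nbij' (fun p => (σ p.1, σ p.2)) (fun p => (σ.symm p.1, σ.symm p.2)) <;>
    intro p hp <;>
    simp_all [Prod.ext_iff, Equiv.apply_eq_iff_eq, ne_eq, EmbeddingLike.apply_eq_iff_eq]

open Finset in
lemma sum_pairs_perm {n : ℕ} (σ : Equiv.Perm (Fin n)) (f : Fin n → Fin n → ℕ)
    (hf : ∀ i j, f i j = f j i) :
    ∑ p ∈ univ.filter (fun p : Fin n × Fin n => p.1 < p.2), f (σ p.1) (σ p.2)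
      = ∑ p ∈ univ.filter (fun p : Fin n × Fin n => p.1 < p.2), f p.1 p.2 := by
  have h1 := sum_offdiag (fun i j => f (σ i) (σ j))
  have h2 := sum_offdiag f
  have h3 := sum_offdiag_perm σ f
  have e1 : ∑ p ∈ univ.filter (fun p : Fin n × Fin n => p.1 < p.2), f (σ p.2) (σ p.1)
      = ∑ p ∈ univ.filter (fun p : Fin n × Fin n => p.1 < p.2), f (σ p.1) (σ p.2) :=
    Finset.sum_congr rfl (fun p _ => hf _ _)
  have e2 : ∑ p ∈ univ.filter (fun p : Fin n × Fin n => p.1 < p.2), f p.2 p.1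
      = ∑ p ∈ univ.filter (fun p : Fin n × Fin n => p.1 < p.2), f p.1 p.2 :=
    Finset.sum_congr rfl (fun p _ => hf _ _)
  omega

/-! ### Concatenation lemmas -/

lemma Diagram.ext' {n : ℕ} {c₁ c₂ : Config n} {D E : Diagram c₁ c₂}
    (hp : D.perm = E.perm) (hl : D.lift = E.lift) : D = E := by
  obtain ⟨p, plb, l, lok⟩ := D
  obtain ⟨q, qlb, m, mok⟩ := E
  simp only at hp hl
  subst hp; subst hl; rfl

lemma Diagram.concat_assoc {n : ℕ} {c₁ c₂ c₃ c₄ : Config n}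
    (D : Diagram c₁ c₂) (E : Diagram c₂ c₃) (H : Diagram c₃ c₄) :
    (D.concat E).concat H = D.concat (E.concat H) := by
  apply Diagram.ext'
  · rfl
  · funext i
    simp only [Diagram.concat, Equiv.trans_apply]
    ring

lemma cross_concat_le {n : ℕ} {c₁ c₂ c₃ : Config n}
    (D : Diagram c₁ c₂) (E : Diagram c₂ c₃) :
    cross (D.concat E) ≤ cross D + cross E := by
  have hsymm : ∀ i j : Fin n,
      crossPair (c₂.pos i - c₂.pos j) (E.lift i - E.lift j)
        = crossPair (c₂.pos j - c₂.pos i) (E.lift j - E.lift i) := by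
    intro i j
    rw [← crossPair_neg (c₂.pos j - c₂.pos i) (E.lift j - E.lift i)]
    congr 1 <;> ring
  have hE : cross E = ∑ p ∈ Finset.univ.filter (fun p : Fin n × Fin n => p.1 < p.2),
      crossPair (c₂.pos (D.perm p.1) - c₂.pos (D.perm p.2))
        (E.lift (D.perm p.1) - E.lift (D.perm p.2)) :=
    (sum_pairs_perm D.perm
      (fun i j => crossPair (c₂.pos i - c₂.pos j) (E.lift i - E.lift j))
      (fun i j => hsymm i j)).symm
  rw [hE]
  unfold cross
  rw [← Finset.sum_add_distrib]
  apply Finset.sum_le_sum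
  intro p hp
  simp only [Finset.mem_filter] at hp
  obtain ⟨ki, hki⟩ := D.liftOk p.1
  obtain ⟨kj, hkj⟩ := D.liftOk p.2
  set x := c₁.pos p.1 - c₁.pos p.2 with hx
  set y := D.lift p.1 - D.lift p.2 with hy
  have hz : (D.concat E).lift p.1 - (D.concat E).lift p.2
      = (E.lift (D.perm p.1) - E.lift (D.perm p.2)) + ((ki : ℝ) - kj) := by
    simp only [Diagram.concat]
    linarith
  have hyc : y = (c₂.pos (D.perm p.1) - c₂.pos (D.perm p.2)) + ((ki : ℝ) - kj) := by
    linarith [hki, hkj]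
  have hyni : ∀ m : ℤ, y ≠ m := by
    intro m hm
    apply c₂.inj (D.perm p.1) (D.perm p.2)
      (fun h => ne_of_lt hp.2 (D.perm.injective h)) (m - (ki - kj))
    push_cast
    linarith [hyc, hm]
  have hEterm : crossPair (c₂.pos (D.perm p.1) - c₂.pos (D.perm p.2))
      (E.lift (D.perm p.1) - E.lift (D.perm p.2))
        = crossPair y ((D.concat E).lift p.1 - (D.concat E).lift p.2) := by
    rw [hz, hyc, ← crossPair_translate (c₂.pos (D.perm p.1) - c₂.pos (D.perm p.2))
      (E.lift (D.perm p.1) - E.lift (D.perm p.2)) (ki - kj)]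
    push_cast
    ring_nf
  rw [hEterm]
  exact crossPair_triangle x y _ hyni

lemma taut_assoc_iff {n : ℕ} {c₁ c₂ c₃ c₄ : Config n}
    (D : Diagram c₁ c₂) (E : Diagram c₂ c₃) (H : Diagram c₃ c₄) :
    (TautConcat D E ∧ TautConcat (D.concat E) H)
      ↔ (TautConcat E H ∧ TautConcat D (E.concat H)) := by
  unfold TautConcat
  have h1 := cross_concat_le D E
  have h2 := cross_concat_le E H
  have h3 := cross_concat_le (D.concat E) H
  have h4 := cross_concat_le D (E.concat H)
  have heq : cross ((D.concat E).concat H) = cross (D.concat (E.concat H)) := by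
    rw [Diagram.concat_assoc]
  omega

/-! ### Associativity -/

/-- The nil composition of the strand-diagram category is associative. -/
theorem nilComp_assoc {n : ℕ} {c₁ c₂ c₃ c₄ : Config n}
    (F : Diagram c₁ c₂ →₀ ℂ) (G : Diagram c₂ c₃ →₀ ℂ) (H : Diagram c₃ c₄ →₀ ℂ) :
    nilComp (nilComp F G) H = nilComp F (nilComp G H) := by
  unfold nilComp
  have hz1 : ∀ K : Diagram c₁ c₃,
      (H.sum fun L d => if TautConcat K L then Finsupp.single (K.concat L) ((0 : ℂ) * d) else 0)
        = 0 := by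
    intro K; simp
  have ha1 : ∀ (K : Diagram c₁ c₃) (b₁ b₂ : ℂ),
      (H.sum fun L d => if TautConcat K L then Finsupp.single (K.concat L) ((b₁ + b₂) * d) else 0)
        = (H.sum fun L d => if TautConcat K L then Finsupp.single (K.concat L) (b₁ * d) else 0)
          + (H.sum fun L d => if TautConcat K L then Finsupp.single (K.concat L) (b₂ * d) else 0) := by
    intro K b₁ b₂
    rw [← Finsupp.sum_add]
    apply Finsupp.sum_congr
    intro L _
    split_ifs <;> simp [add_mul, Finsupp.single_add]
  rw [Finsupp.sum_sum_index (fun K => hz1 K) ha1]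
  apply Finsupp.sum_congr
  intro D hD
  rw [Finsupp.sum_sum_index (fun K => hz1 K) ha1]
  have hz2 : ∀ K : Diagram c₂ c₄,
      (if TautConcat D K then Finsupp.single (D.concat K) (F D * (0 : ℂ)) else 0)
        = (0 : Diagram c₁ c₄ →₀ ℂ) := by
    intro K; split_ifs <;> simp
  have ha2 : ∀ (K : Diagram c₂ c₄) (b₁ b₂ : ℂ),
      (if TautConcat D K then Finsupp.single (D.concat K) (F D * (b₁ + b₂)) else 0)
        = (if TautConcat D K then Finsupp.single (D.concat K) (F D * b₁) else 0)
          + (if TautConcat D K then Finsupp.single (D.concat K) (F D * b₂) else 0) := by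
    intro K b₁ b₂; split_ifs <;> simp [mul_add, Finsupp.single_add]
  rw [Finsupp.sum_sum_index
    (h := fun (K : Diagram c₂ c₄) (c : ℂ) =>
      if TautConcat D K then Finsupp.single (D.concat K) (F D * c) else 0)
    hz2 ha2]
  apply Finsupp.sum_congr
  intro E hE
  rw [Finsupp.sum_sum_index
    (h := fun (K : Diagram c₂ c₄) (c : ℂ) =>
      if TautConcat D K then Finsupp.single (D.concat K) (F D * c) else 0)
    hz2 ha2]
  -- evaluate the middle `ite`s on both sides
  by_cases hDE : TautConcat D E
  · rw [if_pos hDE, Finsupp.sum_single_index (h := fun (K : Diagram c₁ c₃) (c : ℂ) =>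
        H.sum fun L d => if TautConcat K L then Finsupp.single (K.concat L) (c * d) else 0) (hz1 (D.concat E))]
    apply Finsupp.sum_congr
    intro L _
    by_cases hEL : TautConcat E L
    · rw [if_pos hEL, Finsupp.sum_single_index (h := fun (K : Diagram c₂ c₄) (c : ℂ) =>
          if TautConcat D K then Finsupp.single (D.concat K) (F D * c) else 0) (hz2 (E.concat L))]
      by_cases h1 : TautConcat (D.concat E) L
      · rw [if_pos h1, if_pos ((taut_assoc_iff D E L).mp ⟨hDE, h1⟩).2,
          Diagram.concat_assoc, mul_assoc]
      · rw [if_neg h1,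
          if_neg (fun hc => h1 ((taut_assoc_iff D E L).mpr ⟨hEL, hc⟩).2)]
    · rw [if_neg hEL, Finsupp.sum_zero_index,
        if_neg (fun hc => hEL ((taut_assoc_iff D E L).mp ⟨hDE, hc⟩).1)]
  · rw [if_neg hDE, Finsupp.sum_zero_index]
    symm
    have : (H.sum fun L d =>
        ((if TautConcat E L then Finsupp.single (E.concat L) (G E * d) else 0 :
            Diagram c₂ c₄ →₀ ℂ).sum fun K c =>
          if TautConcat D K then Finsupp.single (D.concat K) (F D * c) else 0))
        = H.sum fun _ _ => (0 : Diagram c₁ c₄ →₀ ℂ) := by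
      apply Finsupp.sum_congr
      intro L _
      by_cases hEL : TautConcat E L
      · rw [if_pos hEL, Finsupp.sum_single_index (h := fun (K : Diagram c₂ c₄) (c : ℂ) =>
          if TautConcat D K then Finsupp.single (D.concat K) (F D * c) else 0) (hz2 (E.concat L)),
          if_neg (fun hc => hDE ((taut_assoc_iff D E L).mpr ⟨hEL, hc⟩).1)]
      · rw [if_neg hEL, Finsupp.sum_zero_index]
    rw [this]; exact Finset.sum_const_zero
end
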